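/- Let P = (p₁,p₂,p₃,p₄) be any list of four points in ℝ², and define the generalized coordinatewise median GCM_P : (ℝ²)⁵ → ℝ² by letting the first coordinate of GCM_P(x) be the median (5th smallest) of the nine first coordinates of x₁,…,x₅,p₁,…,p₄, and similarly for the second coordinate. Let A = ((0,20),(0,10),(0,10),(0,10),(0,10)) (so opt(A) = 5), let x̃ be the second smallest among the first coordinates of p₁,…,p₄, and let B = ((x̃,0),(x̃,0),(x̃,0),(x̃−1,1),(x̃−1−1/√2, −1/√2)) (so opt(B) = 1). Then at least one of the following holds: (a) max_{1≤i≤5} ‖A_i − GCM_P(A)‖ ≥ 10 = 2·opt(A), or (b) max_{1≤i≤5} ‖B_i − GCM_P(B)‖ ≥ 1+√2 = (1+√2)·opt(B). -/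

import Mathlib

/-- The median (5th smallest element) of a list of nine reals, via sorting. -/
noncomputable def median9 (l : List ℝ) : ℝ :=
  (l.insertionSort (· ≤ ·)).getD 4 0

/-- A point of the Euclidean plane from its two coordinates. -/
noncomputable def pt (a b : ℝ) : EuclideanSpace ℝ (Fin 2) :=
  (WithLp.equiv 2 (Fin 2 → ℝ)).symm ![a, b]

/-- The generalized coordinatewise median mechanism with four constant (phantom)
points `p`: each coordinate of the output is the median of the nine corresponding
coordinates of the five reports and the four phantom points. -/
noncomputable def gcm (p : Fin 4 → EuclideanSpace ℝ (Fin 2))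
    (x : Fin 5 → EuclideanSpace ℝ (Fin 2)) : EuclideanSpace ℝ (Fin 2) :=
  pt (median9 ((List.ofFn fun i => x i 0) ++ (List.ofFn fun j => p j 0)))
     (median9 ((List.ofFn fun i => x i 1) ++ (List.ofFn fun j => p j 1)))

lemma sorted_le_of_count {s : List ℝ} (hs : s.Pairwise (· ≤ ·)) {k : ℕ} (hk : k < s.length)
    {c : ℝ} (h : k + 1 ≤ s.countP (fun x => x ≤ c)) : s[k] ≤ c := by
  by_contra hc
  push_neg at hc
  have hdrop : s.countP (fun x => x ≤ c) = (s.take k).countP (fun x => x ≤ c) := by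
    conv_lhs => rw [← List.take_append_drop k s]
    rw [List.countP_append]
    have : (s.drop k).countP (fun x => x ≤ c) = 0 := by
      rw [List.countP_eq_zero]
      intro a ha
      obtain ⟨i, hi, rfl⟩ := List.mem_iff_getElem.1 ha
      have hki : k + i < s.length := by simp at hi; omega
      rw [List.getElem_drop (h := by simp; omega)]
      have : s[k] ≤ s[k+i] := by
        have := hs.rel_get_of_le (a := ⟨k, hk⟩) (b := ⟨k+i, hki⟩)
          (by simp [Fin.mk_le_mk])
        simpa using this
      simp only [decide_eq_true_eq]
      push_neg
      linarith
    omega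
  have := List.countP_le_length (p := fun x => x ≤ c) (l := s.take k)
  rw [hdrop] at h
  have : (s.take k).length ≤ k := by simp
  omega

lemma sorted_ge_of_count {s : List ℝ} (hs : s.Pairwise (· ≤ ·)) {k : ℕ} (hk : k < s.length)
    {c : ℝ} (h : s.length - k ≤ s.countP (fun x => c ≤ x)) : c ≤ s[k] := by
  by_contra hc
  push_neg at hc
  have hdrop : s.countP (fun x => c ≤ x) = (s.drop (k+1)).countP (fun x => c ≤ x) := by
    conv_lhs => rw [← List.take_append_drop (k+1) s]
    rw [List.countP_append]
    have : (s.take (k+1)).countP (fun x => c ≤ x) = 0 := by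
      rw [List.countP_eq_zero]
      intro a ha
      obtain ⟨i, hi, rfl⟩ := List.mem_iff_getElem.1 ha
      have hi' : i < k + 1 := by simp at hi; omega
      have hil : i < s.length := by omega
      rw [List.getElem_take]
      have : s[i] ≤ s[k] := by
        have := hs.rel_get_of_le (a := ⟨i, hil⟩) (b := ⟨k, hk⟩)
          (by simp [Fin.mk_le_mk]; omega)
        simpa using this
      simp only [decide_eq_true_eq]
      push_neg
      linarith
    omega
  rw [hdrop] at h
  have h2 := List.countP_le_length (p := fun x => c ≤ x) (l := s.drop (k+1))
  have : (s.drop (k+1)).length = s.length - (k+1) := by simp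
  omega

lemma sorted_count_ge {s : List ℝ} (hs : s.Pairwise (· ≤ ·)) {k : ℕ} (hk : k < s.length)
    {c : ℝ} (hc : c = s[k]) : s.length - k ≤ s.countP (fun x => c ≤ x) := by
  conv_rhs => rw [← List.take_append_drop k s, List.countP_append]
  have hall : (s.drop k).countP (fun x => c ≤ x) = (s.drop k).length := by
    rw [List.countP_eq_length]
    intro a ha
    obtain ⟨i, hi, rfl⟩ := List.mem_iff_getElem.1 ha
    have hki : k + i < s.length := by simp at hi; omega
    rw [List.getElem_drop (h := by simp; omega)]
    have : s[k] ≤ s[k+i] := by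
      have := hs.rel_get_of_le (a := ⟨k, hk⟩) (b := ⟨k+i, hki⟩)
        (by simp [Fin.mk_le_mk])
      simpa using this
    simp only [decide_eq_true_eq]
    linarith [hc ▸ this]
  rw [hall]
  simp

lemma median9_le {l : List ℝ} (hl : l.length = 9) {c : ℝ}
    (h : 5 ≤ l.countP (fun x => x ≤ c)) : median9 l ≤ c := by
  have hlen : (l.insertionSort (· ≤ ·)).length = 9 := by
    rw [List.length_insertionSort]; exact hl
  rw [median9, List.getD_eq_getElem _ _ (by omega)]
  exact sorted_le_of_count (List.pairwise_insertionSort _ l) (by omega)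
    (by rwa [(List.perm_insertionSort _ l).countP_eq])

lemma median9_ge {l : List ℝ} (hl : l.length = 9) {c : ℝ}
    (h : 5 ≤ l.countP (fun x => c ≤ x)) : c ≤ median9 l := by
  have hlen : (l.insertionSort (· ≤ ·)).length = 9 := by
    rw [List.length_insertionSort]; exact hl
  rw [median9, List.getD_eq_getElem _ _ (by omega)]
  exact sorted_ge_of_count (List.pairwise_insertionSort _ l) (by omega)
    (by rw [(List.perm_insertionSort _ l).countP_eq]; omega)

lemma xt_count {l : List ℝ} (hl : l.length = 4) :
    3 ≤ l.countP (fun x => (l.insertionSort (· ≤ ·)).getD 1 0 ≤ x) := by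
  have hlen : (l.insertionSort (· ≤ ·)).length = 4 := by
    rw [List.length_insertionSort]; exact hl
  rw [List.getD_eq_getElem _ _ (by omega), ← (List.perm_insertionSort (· ≤ ·) l).countP_eq]
  have := sorted_count_ge (List.pairwise_insertionSort (· ≤ ·) l) (k := 1) (by omega) rfl
  omega

lemma pt_apply0 (a b : ℝ) : pt a b 0 = a := rfl
lemma pt_apply1 (a b : ℝ) : pt a b 1 = b := rfl

lemma dist_pt (a b c d : ℝ) : dist (pt a b) (pt c d) = Real.sqrt ((a-c)^2 + (b-d)^2) := by
  rw [EuclideanSpace.dist_eq, Fin.sum_univ_two]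
  simp [pt_apply0, pt_apply1, Real.dist_eq, sq_abs]

/-- for any four phantom points `p`, the GCM mechanism incurs egalitarian
social cost at least `10 = 2·opt` on the profile
`A = ((0,20),(0,10),(0,10),(0,10),(0,10))`, or cost at least `1+√2 = (1+√2)·opt` on the
profile `B = ((x̃,0),(x̃,0),(x̃,0),(x̃-1,1),(x̃-1-1/√2,-1/√2))`, where `x̃` is the second
smallest first coordinate of the four phantom points. -/
theorem stmt12 (p : Fin 4 → EuclideanSpace ℝ (Fin 2)) :
    let A : Fin 5 → EuclideanSpace ℝ (Fin 2) :=
      ![pt 0 20, pt 0 10, pt 0 10, pt 0 10, pt 0 10]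
    let xt : ℝ := ((List.ofFn fun j => p j 0).insertionSort (· ≤ ·)).getD 1 0
    let B : Fin 5 → EuclideanSpace ℝ (Fin 2) :=
      ![pt xt 0, pt xt 0, pt xt 0, pt (xt - 1) 1,
        pt (xt - 1 - 1 / Real.sqrt 2) (-(1 / Real.sqrt 2))]
    (10 ≤ ⨆ i, dist (A i) (gcm p A)) ∨
    (1 + Real.sqrt 2 ≤ ⨆ i, dist (B i) (gcm p B)) := by
  intro A xt B
  have hA : A = ![pt 0 20, pt 0 10, pt 0 10, pt 0 10, pt 0 10] := rfl
  have hxt : xt = ((List.ofFn fun j => p j 0).insertionSort (· ≤ ·)).getD 1 0 := rfl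
  have hB : B = ![pt xt 0, pt xt 0, pt xt 0, pt (xt - 1) 1,
      pt (xt - 1 - 1 / Real.sqrt 2) (-(1 / Real.sqrt 2))] := rfl
  have h2pos : (0:ℝ) < Real.sqrt 2 := Real.sqrt_pos.2 (by norm_num)
  have h2sq : Real.sqrt 2 ^ 2 = 2 := Real.sq_sqrt (by norm_num)
  have h2gt1 : (1:ℝ) < Real.sqrt 2 := by nlinarith
  have hs_pos : (0:ℝ) < 1 / Real.sqrt 2 := by positivity
  have hs_lt : 1 / Real.sqrt 2 < 1 := by
    rw [div_lt_one h2pos]; exact h2gt1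
  by_cases hq : ∀ j : Fin 4, 10 < p j 1
  · right
    -- x-coordinate of gcm p B is ≥ xt
    have hxlist : ((List.ofFn fun i => B i 0) ++ (List.ofFn fun j => p j 0)) =
        [xt, xt, xt, xt - 1, xt - 1 - 1/Real.sqrt 2] ++ (List.ofFn fun j => p j 0) := by
      simp [hB, List.ofFn_succ, pt_apply0]
    have hylist : ((List.ofFn fun i => B i 1) ++ (List.ofFn fun j => p j 1)) =
        [0, 0, 0, 1, -(1/Real.sqrt 2), p 0 1, p 1 1, p 2 1, p 3 1] := by
      simp [hB, List.ofFn_succ, pt_apply1]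
    have hlen4 : (List.ofFn fun j => p j 0).length = 4 := by simp
    have hmx : xt ≤ median9 ((List.ofFn fun i => B i 0) ++ (List.ofFn fun j => p j 0)) := by
      rw [hxlist]
      apply median9_ge (by simp)
      rw [List.countP_append]
      have h1 : ¬ (xt ≤ xt - 1) := by linarith
      have h2 : ¬ (xt ≤ xt - 1 - 1/Real.sqrt 2) := by linarith
      have h3 := xt_count hlen4
      rw [← hxt] at h3
      simp only [List.countP_cons, List.countP_nil, decide_eq_true_eq, le_refl,
        if_true, h1, h2, if_false]
      omega
    have hmy : median9 ((List.ofFn fun i => B i 1) ++ (List.ofFn fun j => p j 1)) = 1 := by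
      rw [hylist]
      refine le_antisymm (median9_le (by simp) ?_) (median9_ge (by simp) ?_)
      · have hc : -(1/Real.sqrt 2) ≤ (1:ℝ) := by linarith
        simp only [List.countP_cons, List.countP_nil, decide_eq_true_eq, hc, if_true]
        split_ifs <;> first | omega | (exfalso; linarith)
      · have hc : ¬ ((1:ℝ) ≤ 0) := by norm_num
        have hq0 := hq 0; have hq1 := hq 1; have hq2 := hq 2; have hq3 := hq 3
        have g0 : (1:ℝ) ≤ p 0 1 := by linarith
        have g1 : (1:ℝ) ≤ p 1 1 := by linarith
        have g2 : (1:ℝ) ≤ p 2 1 := by linarith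
        have g3 : (1:ℝ) ≤ p 3 1 := by linarith
        have hc2 : ¬ ((1:ℝ) ≤ -(1/Real.sqrt 2)) := by linarith
        simp only [List.countP_cons, List.countP_nil, decide_eq_true_eq, hc, hc2,
          g0, g1, g2, g3, if_true, if_false, le_refl]
    -- now the distance bound
    have hgcm : gcm p B = pt (median9 ((List.ofFn fun i => B i 0) ++ (List.ofFn fun j => p j 0)))
        (median9 ((List.ofFn fun i => B i 1) ++ (List.ofFn fun j => p j 1))) := rfl
    set mx := median9 ((List.ofFn fun i => B i 0) ++ (List.ofFn fun j => p j 0)) with hmxdef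
    have hd : 1 + Real.sqrt 2 ≤ dist (B 4) (gcm p B) := by
      have hB4 : B 4 = pt (xt - 1 - 1/Real.sqrt 2) (-(1/Real.sqrt 2)) := by rw [hB]; rfl
      rw [hgcm, hmy, hB4, dist_pt]
      have key : (1 + Real.sqrt 2)^2 ≤
          (xt - 1 - 1/Real.sqrt 2 - mx)^2 + (-(1/Real.sqrt 2) - 1)^2 := by
        have hinv : (1/Real.sqrt 2) * Real.sqrt 2 = 1 := by
          field_simp
        nlinarith [sq_nonneg (mx - xt), hmx, sq_nonneg (1/Real.sqrt 2)]
      have h := Real.sqrt_le_sqrt key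
      rwa [Real.sqrt_sq (by positivity : (0:ℝ) ≤ 1 + Real.sqrt 2)] at h
    calc 1 + Real.sqrt 2 ≤ dist (B 4) (gcm p B) := hd
      _ ≤ ⨆ i, dist (B i) (gcm p B) :=
        le_ciSup (f := fun i => dist (B i) (gcm p B))
          (Set.Finite.bddAbove (Set.finite_range _)) (4 : Fin 5)
  · left
    push_neg at hq
    obtain ⟨j, hj⟩ := hq
    have hylist : ((List.ofFn fun i => A i 1) ++ (List.ofFn fun j => p j 1)) =
        [20, 10, 10, 10, 10] ++ [p 0 1, p 1 1, p 2 1, p 3 1] := by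
      simp [hA, List.ofFn_succ, pt_apply1]
    have hmy : median9 ((List.ofFn fun i => A i 1) ++ (List.ofFn fun j => p j 1)) ≤ 10 := by
      rw [hylist]
      apply median9_le (by simp)
      rw [List.countP_append]
      have hfront : List.countP (fun x => decide (x ≤ (10:ℝ))) [20, 10, 10, 10, 10] = 4 := by
        have hc : ¬ ((20:ℝ) ≤ 10) := by norm_num
        simp [List.countP_cons, hc]
      have hback : 0 < List.countP (fun x => decide (x ≤ (10:ℝ)))
          [p 0 1, p 1 1, p 2 1, p 3 1] := by
        rw [List.countP_pos_iff]
        exact ⟨p j 1, by fin_cases j <;> simp, by simpa using hj⟩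
      omega
    have hgcm : gcm p A = pt (median9 ((List.ofFn fun i => A i 0) ++ (List.ofFn fun j => p j 0)))
        (median9 ((List.ofFn fun i => A i 1) ++ (List.ofFn fun j => p j 1))) := rfl
    set my := median9 ((List.ofFn fun i => A i 1) ++ (List.ofFn fun j => p j 1)) with hmydef
    have hd : 10 ≤ dist (A 0) (gcm p A) := by
      have hA0 : A 0 = pt 0 20 := by rw [hA]; rfl
      rw [hgcm, hA0, dist_pt]
      have key : (10:ℝ)^2 ≤ (0 - median9 ((List.ofFn fun i => A i 0) ++ (List.ofFn fun j => p j 0)))^2 + (20 - my)^2 := by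
        nlinarith [sq_nonneg (0 - median9 ((List.ofFn fun i => A i 0) ++ (List.ofFn fun j => p j 0)))]
      have h := Real.sqrt_le_sqrt key
      rwa [Real.sqrt_sq (by norm_num : (0:ℝ) ≤ 10)] at h
    calc (10:ℝ) ≤ dist (A 0) (gcm p A) := hd
      _ ≤ ⨆ i, dist (A i) (gcm p A) :=
        le_ciSup (f := fun i => dist (A i) (gcm p A))
          (Set.Finite.bddAbove (Set.finite_range _)) (0 : Fin 5)
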